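/- Monotonicity of a continuous phase whose tangent is a Herglotz function: let N ≥ 1, let λ₁ < λ₂ < … < λ_N be real numbers, let a₁, …, a_N > 0, let A ∈ ℝ and B > 0. Suppose f : ℝ → ℝ is continuous and satisfies, for every λ ∉ {λ₁, …, λ_N}, cos(f(λ)) ≠ 0 and tan(f(λ)) = A + B Σ_{j=1}^{N} aⱼ/(λⱼ − λ). Then f is strictly increasing on ℝ. -/

import Mathlib

open Real

private lemma arctan_tan_sub_int' (x : ℝ) (hx : Real.cos x ≠ 0) :
    ∃ m : ℤ, Real.arctan (Real.tan x) = x - m * π := by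
  have hπ : (0:ℝ) < π := Real.pi_pos
  set m : ℤ := ⌊x / π + 1/2⌋ with hm
  refine ⟨m, ?_⟩
  have h1 : (m:ℝ) ≤ x / π + 1/2 := Int.floor_le _
  have h2 : x / π + 1/2 < m + 1 := Int.lt_floor_add_one _
  have hl : -(π/2) ≤ x - m * π := by
    have := (mul_le_mul_of_nonneg_right h1 hπ.le)
    rw [add_mul, div_mul_cancel₀ _ hπ.ne'] at this
    nlinarith
  have hr : x - m * π < π/2 := by
    have := (mul_lt_mul_of_pos_right h2 hπ)
    rw [add_mul, div_mul_cancel₀ _ hπ.ne'] at this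
    nlinarith
  have hl' : -(π/2) < x - m * π := by
    rcases lt_or_eq_of_le hl with h | h
    · exact h
    · exfalso
      apply hx
      rw [Real.cos_eq_zero_iff]
      exact ⟨m - 1, by push_cast; linarith⟩
  have : Real.tan x = Real.tan (x - m * π) :=
    (Real.tan_periodic.sub_int_mul_eq m).symm
  rw [this, Real.arctan_tan hl' hr]

private lemma glueIic' {f : ℝ → ℝ} {a b : ℝ} (hab : a ≤ b) (h1 : StrictMonoOn f (Set.Iic a))
    (h2 : StrictMonoOn f (Set.Icc a b)) : StrictMonoOn f (Set.Iic b) := by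
  intro x hx y hy hxy
  simp only [Set.mem_Iic] at hx hy
  rcases le_or_gt y a with hya | hya
  · exact h1 (Set.mem_Iic.2 (hxy.le.trans hya)) (Set.mem_Iic.2 hya) hxy
  · rcases le_or_gt x a with hxa | hxa
    · have hay : f a < f y := h2 ⟨le_refl a, hab⟩ ⟨hya.le, hy⟩ hya
      rcases eq_or_lt_of_le hxa with rfl | hxa'
      · exact hay
      · exact lt_trans (h1 (Set.mem_Iic.2 hxa) (Set.mem_Iic.2 le_rfl) hxa') hay
    · exact h2 ⟨hxa.le, hx⟩ ⟨(hxa.trans hxy).le, hy⟩ hxy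

private lemma glueFinal' {f : ℝ → ℝ} {a : ℝ} (h1 : StrictMonoOn f (Set.Iic a))
    (h2 : StrictMonoOn f (Set.Ici a)) : StrictMono f := by
  intro x y hxy
  rcases le_or_gt y a with hya | hya
  · exact h1 (hxy.le.trans hya) hya hxy
  · rcases le_or_gt a x with hax | hax
    · exact h2 hax (hax.trans hxy.le) hxy
    · exact lt_trans (h1 (Set.mem_Iic.2 hax.le) (Set.mem_Iic.2 (le_refl a)) hax)
        (h2 (Set.mem_Ici.2 (le_refl a)) (Set.mem_Ici.2 hya.le) hya)

theorem herglotz_phase_strictMono (N : ℕ) (hN : 1 ≤ N)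
    (lam : Fin N → ℝ) (hlam : StrictMono lam)
    (a : Fin N → ℝ) (ha : ∀ j, 0 < a j) (A B : ℝ) (hB : 0 < B)
    (f : ℝ → ℝ) (hf : Continuous f)
    (h : ∀ l : ℝ, (∀ j, l ≠ lam j) →
      Real.cos (f l) ≠ 0 ∧
        Real.tan (f l) = A + B * ∑ j, a j / (lam j - l)) :
    StrictMono f := by
  haveI : Nonempty (Fin N) := Fin.pos_iff_nonempty.mp (by omega)
  set g : ℝ → ℝ := fun l => A + B * ∑ j, a j / (lam j - l) with hgdef
  -- Main derivative lemma: away from the poles, f has positive derivative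
  have hder : ∀ x : ℝ, (∀ j, x ≠ lam j) → 0 < deriv f x := by
    intro x hx
    have hUopen : IsOpen {l : ℝ | ∀ j, l ≠ lam j} := by
      have hU : {l : ℝ | ∀ j, l ≠ lam j} = (Set.range lam)ᶜ := by
        ext l
        simp [Set.mem_range, not_exists, eq_comm]
      rw [hU]
      exact (Set.finite_range lam).isClosed.isOpen_compl
    have hUx : {l : ℝ | ∀ j, l ≠ lam j} ∈ nhds x := hUopen.mem_nhds hx
    have hsum : HasDerivAt (fun l => ∑ j, a j / (lam j - l))
        (∑ j, a j / (lam j - x)^2) x := by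
      apply HasDerivAt.fun_sum
      intro j _
      have hne : lam j - x ≠ 0 := sub_ne_zero.2 (Ne.symm (hx j))
      have h1 : HasDerivAt (fun l : ℝ => lam j - l) (-1) x := by
        simpa using (hasDerivAt_id x).const_sub (lam j)
      have h2 := h1.inv hne
      have h3 := h2.const_mul (a j)
      convert h3 using 1
      · rfl
      · funext y; simp [div_eq_mul_inv]
      · ring
    have hgd : HasDerivAt g (B * ∑ j, a j / (lam j - x)^2) x :=
      (hsum.const_mul B).const_add A
    have hgc : ContinuousAt g x := hgd.continuousAt
    obtain ⟨m, hmx⟩ := arctan_tan_sub_int' (f x) (h x hx).1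
    have hgx : Real.arctan (g x) = f x - m * π := by
      have hgx0 : g x = Real.tan (f x) := ((h x hx).2).symm
      rw [hgx0]; exact hmx
    have hkc : ContinuousAt (fun l => f l - Real.arctan (g l)) x :=
      (hf.continuousAt).sub (Real.continuous_arctan.continuousAt.comp hgc)
    have hev1 : ∀ᶠ l in nhds x,
        dist (f l - Real.arctan (g l)) (f x - Real.arctan (g x)) < π :=
      Metric.tendsto_nhds.mp hkc π Real.pi_pos
    have hev : f =ᶠ[nhds x] fun l => Real.arctan (g l) + m * π := by
      filter_upwards [hev1, hUx] with l hl hlU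
      obtain ⟨m', hm'⟩ := arctan_tan_sub_int' (f l) (h l hlU).1
      have hgl : Real.arctan (g l) = f l - m' * π := by
        have hgl0 : g l = Real.tan (f l) := ((h l hlU).2).symm
        rw [hgl0]; exact hm'
      have hmm : m' = m := by
        rw [Real.dist_eq, hgl, hgx] at hl
        have h2 : ((|m' - m| : ℤ) : ℝ) < 1 := by
          rw [Int.cast_abs]
          push_cast
          have h3 : |(m':ℝ) * π - m * π| < π := by
            have heq : (f l - (f l - m' * π)) - (f x - (f x - m * π)) = (m':ℝ) * π - m * π := by
              ring
            rwa [heq] at hl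
          rw [← sub_mul, abs_mul, abs_of_pos Real.pi_pos] at h3
          nlinarith [abs_nonneg ((m':ℝ) - m), Real.pi_pos]
        have h4 : |m' - m| < (1:ℤ) := by exact_mod_cast h2
        have h5 := Int.abs_lt_one_iff.mp h4
        omega
      rw [hgl, hmm]; ring
    have harc : HasDerivAt (fun l => Real.arctan (g l) + m * π)
        (1 / (1 + (g x)^2) * (B * ∑ j, a j / (lam j - x)^2)) x :=
      ((Real.hasDerivAt_arctan (g x)).comp x hgd).add_const _
    have hfd := harc.congr_of_eventuallyEq hev
    rw [hfd.deriv]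
    have hpos : 0 < ∑ j, a j / (lam j - x)^2 := by
      apply Finset.sum_pos
      · intro j _
        have hne : lam j - x ≠ 0 := sub_ne_zero.2 (Ne.symm (hx j))
        exact div_pos (ha j) (lt_of_le_of_ne (sq_nonneg _) (Ne.symm (pow_ne_zero 2 hne)))
      · exact Finset.univ_nonempty
    have h1 : (0:ℝ) < 1 / (1 + (g x)^2) := by positivity
    exact mul_pos h1 (mul_pos hB hpos)
  obtain ⟨M, rfl⟩ : ∃ M, N = M + 1 := ⟨N - 1, by omega⟩
  -- strict monotonicity on the closed pieces
  have piece_Icc : ∀ (n : ℕ) (hn : n + 1 < M + 1),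
      StrictMonoOn f (Set.Icc (lam ⟨n, by omega⟩) (lam ⟨n+1, hn⟩)) := by
    intro n hn
    apply strictMonoOn_of_deriv_pos (convex_Icc _ _) hf.continuousOn
    intro y hy
    rw [interior_Icc] at hy
    apply hder
    intro j
    rcases le_or_gt (j : ℕ) n with hj | hj
    · have hle : lam j ≤ lam ⟨n, by omega⟩ := hlam.monotone (by simp [Fin.le_def]; exact hj)
      exact ne_of_gt (lt_of_le_of_lt hle hy.1)
    · have hle : lam ⟨n+1, hn⟩ ≤ lam j := hlam.monotone (by simp [Fin.le_def]; omega)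
      exact ne_of_lt (lt_of_lt_of_le hy.2 hle)
  have piece_Ici : StrictMonoOn f (Set.Ici (lam (Fin.last M))) := by
    apply strictMonoOn_of_deriv_pos (convex_Ici _) hf.continuousOn
    intro y hy
    rw [interior_Ici] at hy
    apply hder
    intro j
    exact ne_of_gt (lt_of_le_of_lt (hlam.monotone (Fin.le_last j)) hy)
  have iic : ∀ (n : ℕ) (hn : n < M + 1), StrictMonoOn f (Set.Iic (lam ⟨n, hn⟩)) := by
    intro n
    induction n with
    | zero =>
      intro hn
      apply strictMonoOn_of_deriv_pos (convex_Iic _) hf.continuousOn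
      intro y hy
      rw [interior_Iic] at hy
      apply hder
      intro j
      exact ne_of_lt (lt_of_lt_of_le hy (hlam.monotone (by simp [Fin.le_def])))
    | succ n ih =>
      intro hn
      have h1 := ih (by omega)
      have h2 := piece_Icc n hn
      exact glueIic' (hlam.monotone (by simp [Fin.le_def])) h1 h2
  have hlast := iic M (by omega)
  exact glueFinal' hlast piece_Ici
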